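/- Let c₁ > 0, c₂ > 0 with c₁ + c₂ ≤ √2, let ρₓ ≥ 0, and set γ₀ = 2√(1+ρₓ) / ((c₁+c₂)√(4−(c₁+c₂)²)). For every integer n ≥ 1 put ωₙ = n² and ζₙ = (c₁ ωₙ⁻¹ + c₂ ωₙ)/2. Let w : [0,∞) → ℝ be continuous and let z : [0,∞) → ℝ be twice continuously differentiable with z(0) = z'(0) = 0 and z''(t) + 2ζₙωₙ z'(t) + ωₙ² z(t) = w(t) for all t ≥ 0. Then for every T ≥ 0, ∫₀ᵀ ((1 + ρₓωₙ²) z(t)² − γ₀² w(t)²) dt ≤ 0. -/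

import Mathlib

open Set

private lemma stmt2_caseB (g ζ ω ρx c₁ c₂ : ℝ) (hc₂ : 0 < c₂) (hρx : 0 ≤ ρx)
    (hω2 : 1 ≤ ω ^ 2) (hζω : 2 * ζ * ω = c₁ + c₂ * ω ^ 2)
    (hs : 0 < c₁ + c₂) (hs2 : (c₁ + c₂) ^ 2 ≤ 2)
    (hG : g * ((c₁ + c₂) ^ 2 * (4 - (c₁ + c₂) ^ 2)) = 4 * (1 + ρx)) (hG0 : 0 < g)
    (hcase : ζ ^ 2 ≤ 1 / 2) :
    0 ≤ 4 * g * ((4 * g * ζ ^ 2 * ω ^ 2) * ω ^ 2 - (1 + ρx * ω ^ 2))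
      - (4 * g * ζ ^ 2 * ω ^ 2) ^ 2 := by
  have hu_ge : c₁ + c₂ ≤ c₁ + c₂ * ω ^ 2 := by nlinarith
  have hueq : (c₁ + c₂ * ω ^ 2) ^ 2 = 4 * ζ ^ 2 * ω ^ 2 := by rw [← hζω]; ring
  have hu2 : (c₁ + c₂ * ω ^ 2) ^ 2 ≤ 2 * ω ^ 2 := by
    have h := mul_nonneg (by linarith : (0:ℝ) ≤ 1 / 2 - ζ ^ 2) (sq_nonneg ω)
    nlinarith
  have hxy : 0 ≤ (c₁ + c₂ * ω ^ 2) ^ 2 - (c₁ + c₂) ^ 2 := by nlinarith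
  have hsum : 0 ≤ 4 * ω ^ 2 - (c₁ + c₂ * ω ^ 2) ^ 2 - (c₁ + c₂) ^ 2 := by nlinarith
  have step2 : (c₁ + c₂) ^ 2 * (4 * ω ^ 2 - (c₁ + c₂) ^ 2)
      ≤ (c₁ + c₂ * ω ^ 2) ^ 2 * (4 * ω ^ 2 - (c₁ + c₂ * ω ^ 2) ^ 2) := by
    nlinarith [mul_nonneg hxy hsum]
  have step3 : ω ^ 2 * ((c₁ + c₂) ^ 2 * (4 - (c₁ + c₂) ^ 2))
      ≤ (c₁ + c₂) ^ 2 * (4 * ω ^ 2 - (c₁ + c₂) ^ 2) := by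
    nlinarith [mul_nonneg (mul_nonneg (sq_nonneg (c₁ + c₂)) (sq_nonneg (c₁ + c₂)))
      (by linarith : (0:ℝ) ≤ ω ^ 2 - 1)]
  have H : 4 * (1 + ρx * ω ^ 2)
      ≤ g * ((c₁ + c₂ * ω ^ 2) ^ 2 * (4 * ω ^ 2 - (c₁ + c₂ * ω ^ 2) ^ 2)) := by
    have h1 : g * (ω ^ 2 * ((c₁ + c₂) ^ 2 * (4 - (c₁ + c₂) ^ 2)))
        ≤ g * ((c₁ + c₂ * ω ^ 2) ^ 2 * (4 * ω ^ 2 - (c₁ + c₂ * ω ^ 2) ^ 2)) := by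
      apply mul_le_mul_of_nonneg_left _ hG0.le
      linarith
    have h2 : g * (ω ^ 2 * ((c₁ + c₂) ^ 2 * (4 - (c₁ + c₂) ^ 2)))
        = 4 * (1 + ρx) * ω ^ 2 := by
      rw [show g * (ω ^ 2 * ((c₁ + c₂) ^ 2 * (4 - (c₁ + c₂) ^ 2)))
        = g * ((c₁ + c₂) ^ 2 * (4 - (c₁ + c₂) ^ 2)) * ω ^ 2 by ring, hG]
    nlinarith
  rw [hueq] at H
  nlinarith [mul_le_mul_of_nonneg_left H hG0.le]

private lemma stmt2_caseA (g ω ρx c₁ c₂ : ℝ) (hρx : 0 ≤ ρx)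
    (hω2 : 1 ≤ ω ^ 2) (hs2 : (c₁ + c₂) ^ 2 ≤ 2)
    (hG : g * ((c₁ + c₂) ^ 2 * (4 - (c₁ + c₂) ^ 2)) = 4 * (1 + ρx)) (hG0 : 0 < g) :
    0 ≤ 4 * g * ((2 * g * ω ^ 2) * ω ^ 2 - (1 + ρx * ω ^ 2)) - (2 * g * ω ^ 2) ^ 2 := by
  have hGge : 1 + ρx ≤ g := by nlinarith [sq_nonneg ((c₁ + c₂) ^ 2 - 2)]
  have hw4 : ω ^ 2 ≤ ω ^ 2 * ω ^ 2 := by nlinarith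
  have hq4 : 1 + ρx * ω ^ 2 ≤ (1 + ρx) * (ω ^ 2 * ω ^ 2) := by
    nlinarith [mul_le_mul_of_nonneg_left hw4 hρx]
  have h1 : (1 + ρx) * (ω ^ 2 * ω ^ 2) ≤ g * (ω ^ 2 * ω ^ 2) := by nlinarith
  nlinarith [mul_le_mul_of_nonneg_left (le_trans hq4 h1) hG0.le]

private lemma stmt2_dissip (g ζ ω ρx P Z Z' Z'' : ℝ) (hG0 : 0 < g)
    (hA : 0 ≤ 4 * g * (P * ω ^ 2 - (1 + ρx * ω ^ 2)) - P ^ 2)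
    (hB : 0 ≤ 16 * g * g * ζ ^ 2 * ω ^ 2 - 4 * g * P) :
    (1 + ρx * ω ^ 2) * Z ^ 2 - g * (Z'' + 2 * ζ * ω * Z' + ω ^ 2 * Z) ^ 2
      ≤ -(4 * g * ζ * ω ^ 3 * (Z * Z') + P * (Z' ^ 2 + Z * Z'')
          + 4 * g * ζ * ω * (Z' * Z'')) := by
  have h1 : 4 * g * ((1 + ρx * ω ^ 2) * Z ^ 2
      - g * (Z'' + 2 * ζ * ω * Z' + ω ^ 2 * Z) ^ 2
      + (4 * g * ζ * ω ^ 3 * (Z * Z') + P * (Z' ^ 2 + Z * Z'')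
        + 4 * g * ζ * ω * (Z' * Z'')))
      = -(2 * g * (Z'' + 2 * ζ * ω * Z' + ω ^ 2 * Z) - P * Z - 4 * g * ζ * ω * Z') ^ 2
        - (4 * g * (P * ω ^ 2 - (1 + ρx * ω ^ 2)) - P ^ 2) * Z ^ 2
        - (16 * g * g * ζ ^ 2 * ω ^ 2 - 4 * g * P) * Z' ^ 2 := by ring
  nlinarith [h1, sq_nonneg (2 * g * (Z'' + 2 * ζ * ω * Z' + ω ^ 2 * Z)
      - P * Z - 4 * g * ζ * ω * Z'),
    mul_nonneg hA (sq_nonneg Z), mul_nonneg hB (sq_nonneg Z')]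

private lemma stmt2_storage (p₁ P p₃ a b : ℝ) (hp₁ : 0 < p₁) (h13 : P ^ 2 ≤ p₁ * p₃) :
    0 ≤ p₁ / 2 * (a * a) + P * (a * b) + p₃ / 2 * (b * b) := by
  nlinarith [sq_nonneg (p₁ * a + P * b), mul_nonneg (sub_nonneg.2 h13) (sq_nonneg b)]

set_option maxHeartbeats 1000000 in
/-- Proposition 2 (modal form): each mode of the control-free damped
Euler–Bernoulli beam has L² gain at most γ₀. -/
theorem stmt_2 (c₁ c₂ : ℝ) (hc₁ : 0 < c₁) (hc₂ : 0 < c₂)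
    (hc : c₁ + c₂ ≤ Real.sqrt 2)
    (ρx : ℝ) (hρx : 0 ≤ ρx)
    (γ₀ : ℝ)
    (hγ₀ : γ₀ = 2 * Real.sqrt (1 + ρx) /
      ((c₁ + c₂) * Real.sqrt (4 - (c₁ + c₂) ^ 2)))
    (n : ℕ) (hn : 1 ≤ n)
    (ω ζ : ℝ) (hω : ω = (n : ℝ) ^ 2) (hζ : ζ = (c₁ * ω⁻¹ + c₂ * ω) / 2)
    (w : ℝ → ℝ) (hw : ContinuousOn w (Ici 0))
    (z z' z'' : ℝ → ℝ)
    (hz0 : z 0 = 0) (hz'0 : z' 0 = 0)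
    (hz : ∀ t ∈ Ici (0 : ℝ), HasDerivWithinAt z (z' t) (Ici 0) t)
    (hz' : ∀ t ∈ Ici (0 : ℝ), HasDerivWithinAt z' (z'' t) (Ici 0) t)
    (hz'' : ContinuousOn z'' (Ici 0))
    (hode : ∀ t ∈ Ici (0 : ℝ), z'' t + 2 * ζ * ω * z' t + ω ^ 2 * z t = w t) :
    ∀ T ≥ (0 : ℝ),
      ∫ t in (0 : ℝ)..T, ((1 + ρx * ω ^ 2) * (z t) ^ 2 - γ₀ ^ 2 * (w t) ^ 2) ≤ 0 := by
  intro T hT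
  -- basic facts
  have hs : 0 < c₁ + c₂ := by linarith
  have hs2 : (c₁ + c₂) ^ 2 ≤ 2 := by
    have h2 : Real.sqrt 2 ^ 2 = 2 := Real.sq_sqrt (by norm_num)
    nlinarith [Real.sqrt_nonneg 2]
  have h4s : 0 < 4 - (c₁ + c₂) ^ 2 := by linarith
  have hω1 : (1 : ℝ) ≤ ω := by
    have h1 : (1 : ℝ) ≤ (n : ℝ) := by exact_mod_cast hn
    rw [hω]; nlinarith
  have hω0 : 0 < ω := lt_of_lt_of_le one_pos hω1
  have hω2 : (1 : ℝ) ≤ ω ^ 2 := by nlinarith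
  have hζ0 : 0 < ζ := by
    have h1 := mul_pos hc₁ (inv_pos.2 hω0)
    have h2 := mul_pos hc₂ hω0
    rw [hζ]; linarith
  have hζω : 2 * ζ * ω = c₁ + c₂ * ω ^ 2 := by
    rw [hζ]; field_simp
  -- the squared gain
  have hG : γ₀ ^ 2 * ((c₁ + c₂) ^ 2 * (4 - (c₁ + c₂) ^ 2)) = 4 * (1 + ρx) := by
    have e1 : Real.sqrt (1 + ρx) ^ 2 = 1 + ρx := Real.sq_sqrt (by linarith)
    have e2 : Real.sqrt (4 - (c₁ + c₂) ^ 2) ^ 2 = 4 - (c₁ + c₂) ^ 2 :=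
      Real.sq_sqrt h4s.le
    rw [hγ₀, div_pow, mul_pow, mul_pow, e1, e2,
      div_mul_cancel₀ _ (ne_of_gt (mul_pos (pow_pos hs 2) h4s))]
    ring
  have hG0 : 0 < γ₀ ^ 2 := by nlinarith [mul_pos (pow_pos hs 2) h4s]
  -- storage-function coefficients
  set P : ℝ := if ζ ^ 2 ≤ 1 / 2 then 4 * γ₀ ^ 2 * ζ ^ 2 * ω ^ 2 else 2 * γ₀ ^ 2 * ω ^ 2
    with hP
  have hA' : 0 ≤ 4 * γ₀ ^ 2 * (P * ω ^ 2 - (1 + ρx * ω ^ 2)) - P ^ 2 := by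
    by_cases hcase : ζ ^ 2 ≤ 1 / 2
    · rw [hP, if_pos hcase]
      exact stmt2_caseB (γ₀ ^ 2) ζ ω ρx c₁ c₂ hc₂ hρx hω2 hζω hs hs2 hG hG0 hcase
    · rw [hP, if_neg hcase]
      exact stmt2_caseA (γ₀ ^ 2) ω ρx c₁ c₂ hρx hω2 hs2 hG hG0
  have hB' : 0 ≤ 16 * γ₀ ^ 2 * γ₀ ^ 2 * ζ ^ 2 * ω ^ 2 - 4 * γ₀ ^ 2 * P := by
    by_cases hcase : ζ ^ 2 ≤ 1 / 2
    · rw [hP, if_pos hcase, ← sub_nonneg,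
        show 16 * γ₀ ^ 2 * γ₀ ^ 2 * ζ ^ 2 * ω ^ 2 - 4 * γ₀ ^ 2 * (4 * γ₀ ^ 2 * ζ ^ 2 * ω ^ 2)
          - 0 = 0 by ring]
    · rw [hP, if_neg hcase]
      push_neg at hcase
      rw [← sub_nonneg,
        show 16 * γ₀ ^ 2 * γ₀ ^ 2 * ζ ^ 2 * ω ^ 2 - 4 * γ₀ ^ 2 * (2 * γ₀ ^ 2 * ω ^ 2) - 0
          = 8 * γ₀ ^ 2 * γ₀ ^ 2 * ω ^ 2 * (2 * ζ ^ 2 - 1) by ring]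
      exact mul_nonneg (by positivity) (by linarith)
  have hp13 : P ^ 2 ≤ (4 * γ₀ ^ 2 * ζ * ω ^ 3) * (4 * γ₀ ^ 2 * ζ * ω) := by
    by_cases hcase : ζ ^ 2 ≤ 1 / 2
    · rw [hP, if_pos hcase, ← sub_nonneg,
        show 4 * γ₀ ^ 2 * ζ * ω ^ 3 * (4 * γ₀ ^ 2 * ζ * ω) - (4 * γ₀ ^ 2 * ζ ^ 2 * ω ^ 2) ^ 2
          = 16 * γ₀ ^ 2 * γ₀ ^ 2 * ω ^ 4 * (ζ ^ 2 * (1 - ζ ^ 2)) by ring]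
      exact mul_nonneg (by positivity)
        (mul_nonneg (sq_nonneg ζ) (by linarith))
    · rw [hP, if_neg hcase]
      push_neg at hcase
      rw [← sub_nonneg,
        show 4 * γ₀ ^ 2 * ζ * ω ^ 3 * (4 * γ₀ ^ 2 * ζ * ω) - (2 * γ₀ ^ 2 * ω ^ 2) ^ 2
          = 4 * γ₀ ^ 2 * γ₀ ^ 2 * ω ^ 4 * (4 * ζ ^ 2 - 1) by ring]
      exact mul_nonneg (by positivity) (by linarith)
  have hp1pos : 0 < 4 * γ₀ ^ 2 * ζ * ω ^ 3 := by positivity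
  -- the storage function
  set V : ℝ → ℝ := fun t => 4 * γ₀ ^ 2 * ζ * ω ^ 3 / 2 * (z t * z t)
      + P * (z t * z' t) + 4 * γ₀ ^ 2 * ζ * ω / 2 * (z' t * z' t) with hVdef
  set V' : ℝ → ℝ := fun t => 4 * γ₀ ^ 2 * ζ * ω ^ 3 * (z t * z' t)
      + P * ((z' t) ^ 2 + z t * z'' t) + 4 * γ₀ ^ 2 * ζ * ω * (z' t * z'' t) with hV'def
  have hV : ∀ t ∈ Ici (0 : ℝ), HasDerivWithinAt V (V' t) (Ici 0) t := by
    intro t ht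
    have h1 := hz t ht
    have h2 := hz' t ht
    have h3 := (((h1.mul h1).const_mul (4 * γ₀ ^ 2 * ζ * ω ^ 3 / 2)).add
      ((h1.mul h2).const_mul P)).add ((h2.mul h2).const_mul (4 * γ₀ ^ 2 * ζ * ω / 2))
    refine h3.congr_deriv ?_
    rw [hV'def]; ring
  have hzc : ContinuousOn z (Ici 0) := fun t ht => (hz t ht).continuousWithinAt
  have hz'c : ContinuousOn z' (Ici 0) := fun t ht => (hz' t ht).continuousWithinAt
  have hIcc : Icc (0 : ℝ) T ⊆ Ici 0 := fun t ht => ht.1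
  -- integrability
  have hVc : ContinuousOn V (Ici 0) := by
    apply ContinuousOn.add
    apply ContinuousOn.add
    · exact continuousOn_const.mul (hzc.mul hzc)
    · exact continuousOn_const.mul (hzc.mul hz'c)
    · exact continuousOn_const.mul (hz'c.mul hz'c)
  have hV'c : ContinuousOn V' (Ici 0) := by
    apply ContinuousOn.add
    apply ContinuousOn.add
    · exact continuousOn_const.mul (hzc.mul hz'c)
    · exact continuousOn_const.mul (((hz'c.pow 2).add (hzc.mul hz'')))
    · exact continuousOn_const.mul (hz'c.mul hz'')
  have hFint : IntervalIntegrable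
      (fun t => (1 + ρx * ω ^ 2) * (z t) ^ 2 - γ₀ ^ 2 * (w t) ^ 2)
      MeasureTheory.volume 0 T := by
    apply ContinuousOn.intervalIntegrable
    rw [uIcc_of_le hT]
    exact ((continuousOn_const.mul ((hzc.mono hIcc).pow 2)).sub
      (continuousOn_const.mul ((hw.mono hIcc).pow 2)))
  have hV'int : IntervalIntegrable V' MeasureTheory.volume 0 T := by
    apply ContinuousOn.intervalIntegrable
    rw [uIcc_of_le hT]
    exact hV'c.mono hIcc
  -- fundamental theorem of calculus
  have hVft : ∫ t in (0:ℝ)..T, V' t = V T - V 0 := by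
    apply intervalIntegral.integral_eq_sub_of_hasDeriv_right_of_le hT
      (hVc.mono hIcc) _ hV'int
    intro t ht
    exact (hV t (le_of_lt ht.1)).mono (fun y hy => le_of_lt (lt_trans ht.1 hy))
  -- pointwise dissipation inequality
  have hpt : ∀ t ∈ Icc (0 : ℝ) T,
      (1 + ρx * ω ^ 2) * (z t) ^ 2 - γ₀ ^ 2 * (w t) ^ 2 ≤ -V' t := by
    intro t ht
    have ho := hode t ht.1
    rw [hV'def, ← ho]
    exact stmt2_dissip (γ₀ ^ 2) ζ ω ρx P (z t) (z' t) (z'' t) hG0 hA' hB'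
  -- put everything together
  have hmono : (∫ t in (0:ℝ)..T, ((1 + ρx * ω ^ 2) * (z t) ^ 2 - γ₀ ^ 2 * (w t) ^ 2))
      ≤ ∫ t in (0:ℝ)..T, -V' t :=
    intervalIntegral.integral_mono_on hT hFint hV'int.neg hpt
  have hV0 : V 0 = 0 := by rw [hVdef]; simp [hz0, hz'0]
  have hVT : 0 ≤ V T := by
    rw [hVdef]
    exact stmt2_storage _ P _ (z T) (z' T) hp1pos hp13
  have hneg : (∫ t in (0:ℝ)..T, -V' t) = -(V T - V 0) := by
    rw [intervalIntegral.integral_neg, hVft]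
  rw [hneg, hV0] at hmono
  linarith
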